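/- Let A be a real Banach algebra with identity 1 and let G be a subgroup of the group of units of A. Then the tangent space T₁(G) is a real vector subspace of A: 0 ∈ T₁(G), and if X, Y ∈ T₁(G) and λ ∈ ℝ, then X + Y ∈ T₁(G) and λX ∈ T₁(G). -/

import Mathlib

/-- The tangent space at 1 to a subgroup `G` of the units of a normed algebra `A`:
all derivatives `a'(0)` of curves `a : ℝ → A` that take values in `G`, satisfy
`a 0 = 1`, and are differentiable at `0`. -/
def tangentSpaceAtOne {A : Type*} [NormedRing A] [NormedAlgebra ℝ A]
    (G : Subgroup Aˣ) : Set A :=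
  {X : A | ∃ a : ℝ → A, (∀ t : ℝ, ∃ g ∈ G, a t = (g : A)) ∧ a 0 = 1 ∧ HasDerivAt a X 0}

/-- The tangent space at 1 to a subgroup of the units of a real Banach algebra is a
real vector subspace: it contains 0 and is closed under addition and scalar
multiplication. -/
theorem tangentSpaceAtOne_subspace {A : Type*} [NormedRing A] [NormedAlgebra ℝ A]
    [CompleteSpace A] (G : Subgroup Aˣ) :
    (0 : A) ∈ tangentSpaceAtOne G
      ∧ (∀ X ∈ tangentSpaceAtOne G, ∀ Y ∈ tangentSpaceAtOne G,
          X + Y ∈ tangentSpaceAtOne G)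
      ∧ (∀ (lam : ℝ), ∀ X ∈ tangentSpaceAtOne G, lam • X ∈ tangentSpaceAtOne G) := by
  refine ⟨⟨fun _ => (1 : A), fun t => ⟨1, G.one_mem, rfl⟩, rfl, hasDerivAt_const 0 1⟩,
    ?_, ?_⟩
  · rintro X ⟨a, haG, ha0, ha⟩ Y ⟨b, hbG, hb0, hb⟩
    refine ⟨fun t => a t * b t, fun t => ?_, by simp [ha0, hb0], ?_⟩
    · obtain ⟨g, hg, hgt⟩ := haG t
      obtain ⟨h, hh, hht⟩ := hbG t
      exact ⟨g * h, G.mul_mem hg hh, by simp [hgt, hht]⟩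
    · have := ha.mul hb
      simp [ha0, hb0] at this
      exact this
  · rintro lam X ⟨a, haG, ha0, ha⟩
    refine ⟨fun t => a (lam * t), fun t => haG (lam * t), by simpa using ha0, ?_⟩
    have h1 : HasDerivAt (fun t : ℝ => lam * t) lam 0 := by
      simpa using (hasDerivAt_id (0 : ℝ)).const_mul lam
    have := HasDerivAt.scomp (x := (0 : ℝ)) (by simpa using ha : HasDerivAt a X (lam * 0)) h1
    exact this
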